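/- The mean M(x,y) = (x-y)/(2 sinh((x-y)/(x+y))) does not admit a harmonic representation: specifically, the derivative of tanh fails the condition 1/(1+z) ≤ (tanh)'(z) on (0,1), since 1/cosh²(z) < 1/(1+z) for z close to 1 (e.g. 1/cosh²(1) < 1/2). -/

import Mathlib

open Real

lemma deriv_tanh_eq (z : ℝ) : deriv Real.tanh z = 1 / Real.cosh z ^ 2 := by
  have h : HasDerivAt Real.tanh
      ((Real.cosh z * Real.cosh z - Real.sinh z * Real.sinh z) / Real.cosh z ^ 2) z := by
    have := (Real.hasDerivAt_sinh z).div (Real.hasDerivAt_cosh z) (Real.cosh_pos z).ne'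
    have heq : Real.tanh = fun y => Real.sinh y / Real.cosh y := by
      funext y; exact Real.tanh_eq_sinh_div_cosh y
    rw [heq]
    exact this
  have key : Real.cosh z * Real.cosh z - Real.sinh z * Real.sinh z = 1 := by
    have := Real.cosh_sq_sub_sinh_sq z; nlinarith [this]
  rw [h.deriv, key]

lemma cosh_log_val : Real.cosh (Real.log (5/2)) ^ 2 = 841/400 := by
  rw [Real.cosh_eq, Real.exp_log (by norm_num), Real.exp_neg, Real.exp_log (by norm_num)]
  norm_num

lemma log_mem : Real.log (5/2) ∈ Set.Ioo (0:ℝ) 1 := by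
  constructor
  · exact Real.log_pos (by norm_num)
  · rw [Real.log_lt_iff_lt_exp (by norm_num)]
    calc (5/2:ℝ) < 2.7182818283 := by norm_num
    _ < Real.exp 1 := Real.exp_one_gt_d9

lemma log_lt : Real.log (5/2) < 11/10 := by
  rw [Real.log_lt_iff_lt_exp (by norm_num)]
  have h1 : Real.exp (11/10 : ℝ) = Real.exp 1 * Real.exp (1/10) := by
    rw [← Real.exp_add]; norm_num
  have h2 : (1:ℝ) + 1/10 < Real.exp (1/10) := by
    have := Real.add_one_lt_exp (x := (1/10 : ℝ)) (by norm_num)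
    linarith
  have h3 : (2.7182818283 : ℝ) < Real.exp 1 := Real.exp_one_gt_d9
  rw [h1]; nlinarith [Real.exp_pos (1/10 : ℝ)]

theorem stmt_10 :
    (1 / Real.cosh 1 ^ 2 < 1 / 2) ∧
    ¬ (∀ z ∈ Set.Ioo (0:ℝ) 1, 1 / (1 + z) ≤ deriv Real.tanh z) ∧
    ¬ (∀ z ∈ Set.Ioo (0:ℝ) 1, 1 / (1 + z) ≤ 1 / Real.cosh z ^ 2) := by
  have hc1 : (2:ℝ) < Real.cosh 1 ^ 2 := by
    have h3 : (2.7182818283 : ℝ) < Real.exp 1 := Real.exp_one_gt_d9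
    have h4 : Real.exp 1 < 2.7182818286 := Real.exp_one_lt_d9
    have h5 : Real.cosh 1 = (Real.exp 1 + Real.exp (-1)) / 2 := Real.cosh_eq 1
    have h6 : Real.exp (-1 : ℝ) = (Real.exp 1)⁻¹ := by rw [Real.exp_neg]
    have hp : (0:ℝ) < Real.exp 1 := Real.exp_pos 1
    rw [h5, h6]
    rw [div_pow]
    rw [lt_div_iff₀ (by norm_num)]
    have : (0.36787 : ℝ) < (Real.exp 1)⁻¹ := by
      rw [lt_inv_comm₀ (by norm_num) hp]; nlinarith
    nlinarith
  have key : ¬ (∀ z ∈ Set.Ioo (0:ℝ) 1, 1 / (1 + z) ≤ 1 / Real.cosh z ^ 2) := by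
    intro h
    have hz := h _ log_mem
    rw [cosh_log_val] at hz
    have h1 : (0:ℝ) < 1 + Real.log (5/2) := by have := log_mem.1; linarith
    rw [div_le_div_iff₀ h1 (by norm_num)] at hz
    have := log_lt
    linarith
  refine ⟨?_, ?_, key⟩
  · rw [div_lt_div_iff₀ (by positivity) (by norm_num)]; linarith
  · intro h
    exact key (fun z hz => by rw [← deriv_tanh_eq]; exact h z hz)
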